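/- (Finite-temperature approximation of the Top-Cycle score) Let P be a probabilistic tournament on n agents satisfying the margin assumption with margin δ > 0, and fix a path-length parameter K ≥ 1. For each agent a let t_0(a) := lim_{τ→0⁺} t_τ(a) (this limit exists). Then there exist constants C > 0 and τ₀ > 0, depending on δ, K and n but not on τ, such that for all τ ∈ (0, τ₀) and all agents a: |t_τ(a) − t_0(a)| ≤ C · τ. -/

import Mathlib

open Filter Topology

/-- The logistic sigmoid. -/
noncomputable def sigmoid (z : ℝ) : ℝ := 1 / (1 + Real.exp (-z))

/-- Soft majority edge matrix `D_τ`. -/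
noncomputable def softEdge {n : ℕ} (P : Matrix (Fin n) (Fin n) ℝ) (τ : ℝ) :
    Matrix (Fin n) (Fin n) ℝ := fun a b => sigmoid ((P a b - 1/2) / τ)

/-- 0/1 adjacency matrix of the hard majority tournament. -/
noncomputable def hardAdj {n : ℕ} (P : Matrix (Fin n) (Fin n) ℝ) : Matrix (Fin n) (Fin n) ℝ :=
  fun a b => if 1/2 < P a b then 1 else 0

/-- Soft reachability matrix `R_τ = Σ_{k=1}^K D_τ^k`. -/
noncomputable def softReach {n : ℕ} (P : Matrix (Fin n) (Fin n) ℝ) (τ : ℝ) (K : ℕ) :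
    Matrix (Fin n) (Fin n) ℝ := ∑ k ∈ Finset.Icc 1 K, softEdge P τ ^ k

/-- softmin over a finite family. -/
noncomputable def softmin {ι : Type*} (τ : ℝ) (s : Finset ι) (f : ι → ℝ) : ℝ :=
  -τ * Real.log (∑ i ∈ s, Real.exp (-(f i) / τ))

/-- scalar soft maximum over a finite family. -/
noncomputable def smax {ι : Type*} (τ : ℝ) (s : Finset ι) (f : ι → ℝ) : ℝ :=
  τ * Real.log (∑ i ∈ s, Real.exp (f i / τ))

/-- Soft Top-Cycle membership score `t_τ(a)`. -/
noncomputable def tcScore {n : ℕ} (P : Matrix (Fin n) (Fin n) ℝ) (τ : ℝ) (K : ℕ) (a : Fin n) : ℝ :=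
  softmin τ ({a}ᶜ : Finset (Fin n)) (fun b => softReach P τ K a b)

/-- Soft cover score `cover_τ(c, a)`. -/
noncomputable def coverScore {n : ℕ} (P : Matrix (Fin n) (Fin n) ℝ) (τ : ℝ) (c a : Fin n) : ℝ :=
  softEdge P τ c a *
    (1 - smax τ (Finset.univ : Finset (Fin n)) (fun b => softEdge P τ a b - softEdge P τ c b))

/-- Soft Uncovered-Set membership score `u_τ(a)`. -/
noncomputable def ucScore {n : ℕ} (P : Matrix (Fin n) (Fin n) ℝ) (τ : ℝ) (a : Fin n) : ℝ :=
  1 - smax τ ({a}ᶜ : Finset (Fin n)) (fun c => coverScore P τ c a)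

/-- `a ≻ b` in the hard majority tournament. -/
def beats {n : ℕ} (P : Matrix (Fin n) (Fin n) ℝ) (a b : Fin n) : Prop := 1/2 < P a b

/-- `a` reaches `b` via a directed path in the hard majority tournament. -/
def reaches {n : ℕ} (P : Matrix (Fin n) (Fin n) ℝ) : Fin n → Fin n → Prop :=
  Relation.TransGen (beats P)

/-- `c` covers `a` in the hard majority tournament. -/
def covers {n : ℕ} (P : Matrix (Fin n) (Fin n) ℝ) (c a : Fin n) : Prop :=
  beats P c a ∧ ∀ b, beats P a b → beats P c b

/-- membership in the Top Cycle of the hard majority tournament. -/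
def inTopCycle {n : ℕ} (P : Matrix (Fin n) (Fin n) ℝ) (a : Fin n) : Prop :=
  ∀ b, b ≠ a → reaches P a b

/-- membership in the Uncovered Set of the hard majority tournament. -/
def inUncovered {n : ℕ} (P : Matrix (Fin n) (Fin n) ℝ) (a : Fin n) : Prop :=
  ∀ c, c ≠ a → ¬ covers P c a

/-- `P` is a probabilistic tournament. -/
def IsProbTournament {n : ℕ} (P : Matrix (Fin n) (Fin n) ℝ) : Prop :=
  (∀ a b, 0 ≤ P a b ∧ P a b ≤ 1) ∧ (∀ a b, P a b + P b a = 1) ∧ ∀ a, P a a = 1/2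

/-- margin assumption with margin `δ`. -/
def HasMargin {n : ℕ} (P : Matrix (Fin n) (Fin n) ℝ) (δ : ℝ) : Prop :=
  ∀ a b, a ≠ b → δ ≤ |P a b - 1/2|

lemma sigmoid_nonneg (z : ℝ) : 0 ≤ sigmoid z := by
  unfold sigmoid; positivity

lemma sigmoid_le_one (z : ℝ) : sigmoid z ≤ 1 := by
  unfold sigmoid
  rw [div_le_one (by positivity)]
  nlinarith [Real.exp_pos (-z)]

lemma sigmoid_zero : sigmoid 0 = 1/2 := by
  unfold sigmoid; norm_num

lemma one_sub_sigmoid_le (z : ℝ) : 1 - sigmoid z ≤ Real.exp (-z) := by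
  unfold sigmoid
  have h : (0:ℝ) < 1 + Real.exp (-z) := by positivity
  have : 1 - 1 / (1 + Real.exp (-z)) = Real.exp (-z) / (1 + Real.exp (-z)) := by
    field_simp
    ring
  rw [this]
  exact div_le_self (Real.exp_pos _).le (by nlinarith [Real.exp_pos (-z)])

lemma sigmoid_le_exp (z : ℝ) : sigmoid z ≤ Real.exp z := by
  unfold sigmoid
  rw [div_le_iff₀ (by positivity)]
  have h : Real.exp z * Real.exp (-z) = 1 := by
    rw [← Real.exp_add]; simp
  nlinarith [Real.exp_pos z]

lemma softmin_ge {ι : Type*} {τ : ℝ} (hτ : 0 < τ) {s : Finset ι} (hs : s.Nonempty)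
    {f g : ι → ℝ} {ε : ℝ} (h : ∀ i ∈ s, g i - ε ≤ f i) :
    softmin τ s g - ε ≤ softmin τ s f := by
  unfold softmin
  have hsum_f : (0:ℝ) < ∑ i ∈ s, Real.exp (-(f i)/τ) :=
    Finset.sum_pos (fun i _ => Real.exp_pos _) hs
  have hsum_g : (0:ℝ) < ∑ i ∈ s, Real.exp (-(g i)/τ) :=
    Finset.sum_pos (fun i _ => Real.exp_pos _) hs
  have key : ∑ i ∈ s, Real.exp (-(f i)/τ)
      ≤ Real.exp (ε/τ) * ∑ i ∈ s, Real.exp (-(g i)/τ) := by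
    rw [Finset.mul_sum]
    refine Finset.sum_le_sum fun i hi => ?_
    rw [← Real.exp_add]
    apply Real.exp_le_exp.mpr
    have hgi := h i hi
    rw [← add_div]
    have hle : -(f i) ≤ ε + -(g i) := by linarith
    gcongr
  have hlog : Real.log (∑ i ∈ s, Real.exp (-(f i)/τ))
      ≤ ε/τ + Real.log (∑ i ∈ s, Real.exp (-(g i)/τ)) := by
    calc Real.log (∑ i ∈ s, Real.exp (-(f i)/τ))
        ≤ Real.log (Real.exp (ε/τ) * ∑ i ∈ s, Real.exp (-(g i)/τ)) :=
          Real.log_le_log hsum_f key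
      _ = ε/τ + Real.log (∑ i ∈ s, Real.exp (-(g i)/τ)) := by
          rw [Real.log_mul (Real.exp_pos _).ne' hsum_g.ne', Real.log_exp]
  have h2 : τ * Real.log (∑ i ∈ s, Real.exp (-(f i)/τ))
      ≤ τ * (ε/τ + Real.log (∑ i ∈ s, Real.exp (-(g i)/τ))) :=
    mul_le_mul_of_nonneg_left hlog hτ.le
  rw [mul_add, mul_div_cancel₀ _ hτ.ne'] at h2
  linarith

lemma abs_softmin_sub_le {ι : Type*} {τ : ℝ} (hτ : 0 < τ) {s : Finset ι} (hs : s.Nonempty)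
    {f g : ι → ℝ} {ε : ℝ} (h : ∀ i ∈ s, |f i - g i| ≤ ε) :
    |softmin τ s f - softmin τ s g| ≤ ε := by
  rw [abs_sub_le_iff]
  constructor
  · have := softmin_ge hτ hs (f := g) (g := f) (ε := ε)
      (fun i hi => by have := h i hi; rw [abs_le] at this; linarith)
    linarith
  · have := softmin_ge hτ hs (f := f) (g := g) (ε := ε)
      (fun i hi => by have := h i hi; rw [abs_le] at this; linarith)
    linarith

lemma softmin_le_inf' {ι : Type*} {τ : ℝ} (hτ : 0 < τ) {s : Finset ι} (hs : s.Nonempty)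
    (f : ι → ℝ) : softmin τ s f ≤ s.inf' hs f := by
  obtain ⟨i₀, hi₀, hmin⟩ := Finset.exists_mem_eq_inf' hs f
  have hsum : Real.exp (-(s.inf' hs f)/τ) ≤ ∑ i ∈ s, Real.exp (-(f i)/τ) := by
    rw [hmin]
    exact Finset.single_le_sum (f := fun i => Real.exp (-(f i)/τ)) (fun i _ => (Real.exp_pos _).le) hi₀
  have hlog : -(s.inf' hs f)/τ ≤ Real.log (∑ i ∈ s, Real.exp (-(f i)/τ)) := by
    calc -(s.inf' hs f)/τ = Real.log (Real.exp (-(s.inf' hs f)/τ)) := (Real.log_exp _).symm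
      _ ≤ _ := Real.log_le_log (Real.exp_pos _) hsum
  have h2 : τ * (-(s.inf' hs f)/τ) ≤ τ * Real.log (∑ i ∈ s, Real.exp (-(f i)/τ)) :=
    mul_le_mul_of_nonneg_left hlog hτ.le
  rw [mul_div_cancel₀ _ hτ.ne'] at h2
  unfold softmin
  linarith

lemma inf'_sub_le_softmin {ι : Type*} {τ : ℝ} (hτ : 0 < τ) {s : Finset ι} (hs : s.Nonempty)
    (f : ι → ℝ) : s.inf' hs f - τ * Real.log s.card ≤ softmin τ s f := by
  have hsum_pos : (0:ℝ) < ∑ i ∈ s, Real.exp (-(f i)/τ) :=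
    Finset.sum_pos (fun i _ => Real.exp_pos _) hs
  have hsum : ∑ i ∈ s, Real.exp (-(f i)/τ) ≤ s.card * Real.exp (-(s.inf' hs f)/τ) := by
    calc ∑ i ∈ s, Real.exp (-(f i)/τ) ≤ ∑ _i ∈ s, Real.exp (-(s.inf' hs f)/τ) := by
          refine Finset.sum_le_sum fun i hi => Real.exp_le_exp.mpr ?_
          have := Finset.inf'_le f hi
          have hneg : -(f i) ≤ -(s.inf' hs f) := by linarith
          gcongr
      _ = s.card * Real.exp (-(s.inf' hs f)/τ) := by rw [Finset.sum_const, nsmul_eq_mul]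
  have hcard : (0:ℝ) < s.card := by
    exact_mod_cast Finset.card_pos.mpr hs
  have hlog : Real.log (∑ i ∈ s, Real.exp (-(f i)/τ))
      ≤ Real.log s.card + (-(s.inf' hs f)/τ) := by
    calc Real.log (∑ i ∈ s, Real.exp (-(f i)/τ))
        ≤ Real.log (s.card * Real.exp (-(s.inf' hs f)/τ)) := Real.log_le_log hsum_pos hsum
      _ = Real.log s.card + (-(s.inf' hs f)/τ) := by
          rw [Real.log_mul hcard.ne' (Real.exp_pos _).ne', Real.log_exp]
  have h2 : τ * Real.log (∑ i ∈ s, Real.exp (-(f i)/τ))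
      ≤ τ * (Real.log s.card + (-(s.inf' hs f)/τ)) :=
    mul_le_mul_of_nonneg_left hlog hτ.le
  rw [mul_add, mul_div_cancel₀ _ hτ.ne'] at h2
  unfold softmin
  linarith

lemma entry_pow_le {n : ℕ} {A : Matrix (Fin n) (Fin n) ℝ}
    (h0 : ∀ a b, 0 ≤ A a b) (h1 : ∀ a b, A a b ≤ 1) :
    ∀ k, (∀ a b, 0 ≤ (A ^ (k+1)) a b) ∧ (∀ a b, (A ^ (k+1)) a b ≤ (n:ℝ)^k) := by
  intro k
  induction k with
  | zero => simpa using ⟨h0, h1⟩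
  | succ k ih =>
    constructor
    · intro a b
      rw [pow_succ', Matrix.mul_apply]
      exact Finset.sum_nonneg fun c _ => mul_nonneg (h0 a c) (ih.1 c b)
    · intro a b
      rw [pow_succ', Matrix.mul_apply]
      calc ∑ c, A a c * (A^(k+1)) c b ≤ ∑ _c : Fin n, 1 * (n:ℝ)^k := by
            refine Finset.sum_le_sum fun c _ => ?_
            exact mul_le_mul (h1 a c) (ih.2 c b) (ih.1 c b) zero_le_one
        _ = (n:ℝ)^(k+1) := by
            rw [Finset.sum_const, Finset.card_univ, Fintype.card_fin, nsmul_eq_mul]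
            ring

lemma entry_pow_diff {n : ℕ} {A B : Matrix (Fin n) (Fin n) ℝ} {ε : ℝ}
    (hA0 : ∀ a b, 0 ≤ A a b) (hA1 : ∀ a b, A a b ≤ 1)
    (hB0 : ∀ a b, 0 ≤ B a b) (hB1 : ∀ a b, B a b ≤ 1)
    (hε : 0 ≤ ε) (hd : ∀ a b, |A a b - B a b| ≤ ε) :
    ∀ (k : ℕ) a b, |(A ^ (k+1)) a b - (B ^ (k+1)) a b| ≤ ((k:ℝ)+1) * (n:ℝ)^k * ε := by
  intro k
  induction k with
  | zero => simpa using hd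
  | succ k ih =>
    intro a b
    rw [pow_succ' A (k+1), pow_succ' B (k+1), Matrix.mul_apply, Matrix.mul_apply]
    have hrw : ∑ c, A a c * (A^(k+1)) c b - ∑ c, B a c * (B^(k+1)) c b
        = ∑ c, (A a c * ((A^(k+1)) c b - (B^(k+1)) c b) + (A a c - B a c) * (B^(k+1)) c b) := by
      rw [← Finset.sum_sub_distrib]
      exact Finset.sum_congr rfl fun c _ => by ring
    rw [hrw]
    calc |∑ c, (A a c * ((A^(k+1)) c b - (B^(k+1)) c b) + (A a c - B a c) * (B^(k+1)) c b)|
        ≤ ∑ c, |A a c * ((A^(k+1)) c b - (B^(k+1)) c b) + (A a c - B a c) * (B^(k+1)) c b| :=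
          Finset.abs_sum_le_sum_abs _ _
      _ ≤ ∑ _c : Fin n, (((k:ℝ)+1) * (n:ℝ)^k * ε + ε * (n:ℝ)^k) := by
          refine Finset.sum_le_sum fun c _ => ?_
          calc |A a c * ((A^(k+1)) c b - (B^(k+1)) c b) + (A a c - B a c) * (B^(k+1)) c b|
              ≤ |A a c * ((A^(k+1)) c b - (B^(k+1)) c b)| + |(A a c - B a c) * (B^(k+1)) c b| :=
                abs_add_le _ _
            _ ≤ ((k:ℝ)+1) * (n:ℝ)^k * ε + ε * (n:ℝ)^k := by
                rw [abs_mul, abs_mul]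
                have t1 : |A a c| * |(A^(k+1)) c b - (B^(k+1)) c b|
                    ≤ 1 * (((k:ℝ)+1) * (n:ℝ)^k * ε) :=
                  mul_le_mul (by rw [abs_of_nonneg (hA0 a c)]; exact hA1 a c) (ih c b)
                    (abs_nonneg _) zero_le_one
                have t2 : |A a c - B a c| * |(B^(k+1)) c b| ≤ ε * (n:ℝ)^k :=
                  mul_le_mul (hd a c)
                    (by rw [abs_of_nonneg ((entry_pow_le hB0 hB1 k).1 c b)]
                        exact (entry_pow_le hB0 hB1 k).2 c b)
                    (abs_nonneg _) hε
                linarith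
      _ = ((k:ℝ)+1+1) * (n:ℝ)^(k+1) * ε := by
          rw [Finset.sum_const, Finset.card_univ, Fintype.card_fin, nsmul_eq_mul]
          ring
      _ = (↑(k+1)+1) * (n:ℝ)^(k+1) * ε := by push_cast; ring

/-- finite-temperature approximation of the soft Top-Cycle score:
the zero-temperature limit `t₀` exists and `|t_τ(a) − t₀(a)| ≤ C·τ` for small `τ`. -/
theorem tcScore_finite_temperature_bound {n : ℕ} (hn : 2 ≤ n)
    (P : Matrix (Fin n) (Fin n) ℝ) (δ : ℝ) (hδ : 0 < δ)
    (hP : IsProbTournament P) (hmargin : HasMargin P δ) (K : ℕ) (hK : 1 ≤ K) :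
    ∃ t0 : Fin n → ℝ,
      (∀ a, Tendsto (fun τ : ℝ => tcScore P τ K a) (𝓝[>] (0:ℝ)) (𝓝 (t0 a))) ∧
      ∃ C : ℝ, 0 < C ∧ ∃ τ₀ : ℝ, 0 < τ₀ ∧
        ∀ τ : ℝ, 0 < τ → τ < τ₀ → ∀ a, |tcScore P τ K a - t0 a| ≤ C * τ := by

  classical
  obtain ⟨hPrange, hPsum, hPdiag⟩ := hP
  set M : Matrix (Fin n) (Fin n) ℝ :=
    fun a b => if a = b then 1/2 else if 1/2 < P a b then 1 else 0 with hMdef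
  set R0 : Matrix (Fin n) (Fin n) ℝ := ∑ k ∈ Finset.Icc 1 K, M ^ k with hR0def
  have hcompl : ∀ a : Fin n, ({a}ᶜ : Finset (Fin n)).Nonempty := by
    intro a
    rw [← Finset.card_pos, Finset.card_compl, Finset.card_singleton, Fintype.card_fin]
    omega
  have hlogn : (0:ℝ) ≤ Real.log n := Real.log_nonneg (by exact_mod_cast (by omega : 1 ≤ n))
  set C : ℝ := (K:ℝ)^2 * (n:ℝ)^K / δ + Real.log n + 1 with hCdef
  have hC : 0 < C := by
    have h1 : (0:ℝ) < (K:ℝ)^2 * (n:ℝ)^K / δ := by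
      apply div_pos _ hδ
      have hKpos : (0:ℝ) < (K:ℝ) := by exact_mod_cast hK
      have hnpos : (0:ℝ) < (n:ℝ) := by exact_mod_cast (by omega : 0 < n)
      positivity
    rw [hCdef]; linarith
  have hM0 : ∀ b c, (0:ℝ) ≤ M b c := by
    intro b c; simp only [hMdef]; split_ifs <;> norm_num
  have hM1 : ∀ b c, M b c ≤ 1 := by
    intro b c; simp only [hMdef]; split_ifs <;> norm_num
  have main : ∀ τ : ℝ, 0 < τ → ∀ a,
      |tcScore P τ K a - ({a}ᶜ : Finset (Fin n)).inf' (hcompl a) (fun b => R0 a b)| ≤ C * τ := by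
    intro τ hτ a
    set ε := Real.exp (-δ/τ) with hεdef
    have hε0 : (0:ℝ) ≤ ε := (Real.exp_pos _).le
    have hετ : ε ≤ τ/δ := by
      have h2 : (0:ℝ) < δ/τ := div_pos hδ hτ
      have h3 : δ/τ ≤ Real.exp (δ/τ) := by linarith [Real.add_one_le_exp (δ/τ)]
      have h4 : ε = (Real.exp (δ/τ))⁻¹ := by rw [hεdef, neg_div, Real.exp_neg]
      have h5 : (Real.exp (δ/τ))⁻¹ ≤ (δ/τ)⁻¹ := inv_anti₀ h2 h3
      rw [inv_div] at h5
      rw [h4]; exact h5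
    have hD0 : ∀ b c, (0:ℝ) ≤ softEdge P τ b c := fun b c => sigmoid_nonneg _
    have hD1 : ∀ b c, softEdge P τ b c ≤ 1 := fun b c => sigmoid_le_one _
    have hedge : ∀ b c, |softEdge P τ b c - M b c| ≤ ε := by
      intro b c
      by_cases hbc : b = c
      · subst hbc
        have h1 : softEdge P τ b b = 1/2 := by
          unfold softEdge
          rw [hPdiag b]
          norm_num [sigmoid_zero]
        have h2 : M b b = 1/2 := by simp only [hMdef]; simp
        rw [h1, h2]; simpa using hε0
      · have hm := hmargin b c hbc
        have hne : P b c ≠ 1/2 := by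
          intro h; rw [h] at hm; simp at hm; linarith
        rcases lt_or_gt_of_ne hne with hlt | hgt
        · have hMbc : M b c = 0 := by
            simp only [hMdef]; rw [if_neg hbc, if_neg (not_lt.mpr hlt.le)]
          rw [hMbc, sub_zero]
          have := sigmoid_nonneg ((P b c - 1/2)/τ)
          rw [show softEdge P τ b c = sigmoid ((P b c - 1/2)/τ) from rfl,
            abs_of_nonneg this]
          calc sigmoid ((P b c - 1/2)/τ) ≤ Real.exp ((P b c - 1/2)/τ) := sigmoid_le_exp _
            _ ≤ Real.exp (-δ/τ) := by
                apply Real.exp_le_exp.mpr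
                have hle : P b c - 1/2 ≤ -δ := by
                  rw [abs_of_nonpos (by linarith)] at hm; linarith
                gcongr
        · have hMbc : M b c = 1 := by
            simp only [hMdef]; rw [if_neg hbc, if_pos hgt]
          rw [hMbc]
          have hs1 := sigmoid_le_one ((P b c - 1/2)/τ)
          rw [show softEdge P τ b c = sigmoid ((P b c - 1/2)/τ) from rfl,
            abs_sub_comm, abs_of_nonneg (by linarith)]
          calc 1 - sigmoid ((P b c - 1/2)/τ)
              ≤ Real.exp (-((P b c - 1/2)/τ)) := one_sub_sigmoid_le _
            _ ≤ Real.exp (-δ/τ) := by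
                apply Real.exp_le_exp.mpr
                have hle : δ ≤ P b c - 1/2 := by
                  rw [abs_of_nonneg (by linarith)] at hm; linarith
                rw [neg_div, ← neg_div, neg_div, neg_le_neg_iff]
                gcongr
    have hrow : ∀ b, |softReach P τ K a b - R0 a b| ≤ (K:ℝ) * ((K:ℝ) * (n:ℝ)^K * ε) := by
      intro b
      have hexp : softReach P τ K a b - R0 a b
          = ∑ k ∈ Finset.Icc 1 K, ((softEdge P τ ^ k) a b - (M ^ k) a b) := by
        rw [hR0def]
        unfold softReach
        rw [Matrix.sum_apply, Matrix.sum_apply, Finset.sum_sub_distrib]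
      rw [hexp]
      calc |∑ k ∈ Finset.Icc 1 K, ((softEdge P τ ^ k) a b - (M ^ k) a b)|
          ≤ ∑ k ∈ Finset.Icc 1 K, |(softEdge P τ ^ k) a b - (M ^ k) a b| :=
            Finset.abs_sum_le_sum_abs _ _
        _ ≤ ∑ _k ∈ Finset.Icc 1 K, ((K:ℝ) * (n:ℝ)^K * ε) := by
            refine Finset.sum_le_sum fun k hk => ?_
            rw [Finset.mem_Icc] at hk
            obtain ⟨j, rfl⟩ : ∃ j, k = j + 1 := ⟨k - 1, by omega⟩
            calc |(softEdge P τ ^ (j+1)) a b - (M ^ (j+1)) a b|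
                ≤ ((j:ℝ)+1) * (n:ℝ)^j * ε :=
                  entry_pow_diff hD0 hD1 hM0 hM1 hε0 hedge j a b
              _ ≤ (K:ℝ) * (n:ℝ)^K * ε := by
                  have h1 : ((j:ℝ)+1) ≤ (K:ℝ) := by exact_mod_cast hk.2
                  have h2 : (n:ℝ)^j ≤ (n:ℝ)^K := by
                    apply pow_le_pow_right₀ (by exact_mod_cast (by omega : 1 ≤ n))
                    omega
                  have h3 : (0:ℝ) ≤ (n:ℝ)^j := by positivity
                  have h4 : (0:ℝ) ≤ (K:ℝ) := by positivity
                  exact mul_le_mul (mul_le_mul h1 h2 h3 h4) le_rfl hε0 (by positivity)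
        _ = (K:ℝ) * ((K:ℝ) * (n:ℝ)^K * ε) := by
            rw [Finset.sum_const, Nat.card_Icc, nsmul_eq_mul]
            norm_num
    have step1 : |tcScore P τ K a - softmin τ ({a}ᶜ : Finset (Fin n)) (fun b => R0 a b)|
        ≤ (K:ℝ) * ((K:ℝ) * (n:ℝ)^K * ε) := by
      unfold tcScore
      exact abs_softmin_sub_le hτ (hcompl a) (fun b _ => hrow b)
    have step2 : |softmin τ ({a}ᶜ : Finset (Fin n)) (fun b => R0 a b)
        - ({a}ᶜ : Finset (Fin n)).inf' (hcompl a) (fun b => R0 a b)| ≤ Real.log n * τ := by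
      have hub := softmin_le_inf' hτ (hcompl a) (fun b => R0 a b)
      have hlb := inf'_sub_le_softmin hτ (hcompl a) (fun b => R0 a b)
      have hcard1 : 1 ≤ ({a}ᶜ : Finset (Fin n)).card := Finset.card_pos.mpr (hcompl a)
      have hcardn : ({a}ᶜ : Finset (Fin n)).card ≤ n := by
        have := Finset.card_le_univ ({a}ᶜ : Finset (Fin n))
        simpa [Fintype.card_fin] using this
      have hlogcard : Real.log ({a}ᶜ : Finset (Fin n)).card ≤ Real.log n := by
        apply Real.log_le_log (by exact_mod_cast hcard1)
        exact_mod_cast hcardn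
      have hlogcard0 : (0:ℝ) ≤ Real.log ({a}ᶜ : Finset (Fin n)).card :=
        Real.log_nonneg (by exact_mod_cast hcard1)
      have hmul : τ * Real.log ({a}ᶜ : Finset (Fin n)).card ≤ Real.log n * τ := by
        rw [mul_comm]
        exact mul_le_mul_of_nonneg_right hlogcard hτ.le
      rw [abs_le]
      constructor
      · nlinarith
      · nlinarith
    have hmul2 : (K:ℝ) * ((K:ℝ) * (n:ℝ)^K * ε) ≤ (K:ℝ)^2 * (n:ℝ)^K / δ * τ := by
      have h1 : (0:ℝ) ≤ (K:ℝ)^2 * (n:ℝ)^K := by positivity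
      have h2 : (K:ℝ)^2 * (n:ℝ)^K * ε ≤ (K:ℝ)^2 * (n:ℝ)^K * (τ/δ) :=
        mul_le_mul_of_nonneg_left hετ h1
      calc (K:ℝ) * ((K:ℝ) * (n:ℝ)^K * ε) = (K:ℝ)^2 * (n:ℝ)^K * ε := by ring
        _ ≤ (K:ℝ)^2 * (n:ℝ)^K * (τ/δ) := h2
        _ = (K:ℝ)^2 * (n:ℝ)^K / δ * τ := by ring
    have htri := abs_sub_le (tcScore P τ K a)
      (softmin τ ({a}ᶜ : Finset (Fin n)) (fun b => R0 a b))
      (({a}ᶜ : Finset (Fin n)).inf' (hcompl a) (fun b => R0 a b))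
    have hCτ : C * τ = (K:ℝ)^2 * (n:ℝ)^K / δ * τ + Real.log n * τ + τ := by
      rw [hCdef]; ring
    calc |tcScore P τ K a - ({a}ᶜ : Finset (Fin n)).inf' (hcompl a) (fun b => R0 a b)|
        ≤ |tcScore P τ K a - softmin τ ({a}ᶜ : Finset (Fin n)) (fun b => R0 a b)| +
          |softmin τ ({a}ᶜ : Finset (Fin n)) (fun b => R0 a b)
            - ({a}ᶜ : Finset (Fin n)).inf' (hcompl a) (fun b => R0 a b)| := htri
      _ ≤ (K:ℝ)^2 * (n:ℝ)^K / δ * τ + Real.log n * τ := by linarith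
      _ ≤ C * τ := by rw [hCτ]; linarith
  refine ⟨fun a => ({a}ᶜ : Finset (Fin n)).inf' (hcompl a) (fun b => R0 a b),
    fun a => ?_, C, hC, 1, one_pos, fun τ h1 _ a => main τ h1 a⟩
  have hsq : Tendsto (fun τ : ℝ =>
      tcScore P τ K a - ({a}ᶜ : Finset (Fin n)).inf' (hcompl a) (fun b => R0 a b))
      (𝓝[>] (0:ℝ)) (𝓝 0) := by
    apply squeeze_zero_norm' (a := fun τ : ℝ => C * τ)
    · exact Filter.eventually_of_mem self_mem_nhdsWithin fun τ hτ => by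
        simpa [Real.norm_eq_abs] using main τ hτ a
    · have h2 : Tendsto (fun τ : ℝ => C * τ) (𝓝 (0:ℝ)) (𝓝 (C * 0)) :=
        (continuous_const.mul continuous_id).tendsto 0
      simpa using h2.mono_left nhdsWithin_le_nhds
  simpa using hsq.add_const
    (({a}ᶜ : Finset (Fin n)).inf' (hcompl a) (fun b => R0 a b))
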